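/- arXiv:1511.09238 — 3 statements merged into one kernel-verified Lean document; each statement's English description precedes it below -/
import Mathlib

section
/- Let G be a totally disconnected locally compact Hausdorff topological group and μ a left-invariant Haar measure on G. Then for every g ∈ G and every compact open subgroup U of G, one has s(g) · μ(U) = s(g⁻¹) · μ(Ug⁻¹); equivalently, s(g)/s(g⁻¹) = Δ(g) where Δ is the modular function. -/
open MeasureTheory Pointwise ENNReal

variable {G : Type*}

/-- The conjugate subgroup `gUg⁻¹`. -/
def conjSubgroup [Group G] (g : G) (U : Subgroup G) : Subgroup G :=
  U.map (MulAut.conj g).toMonoidHom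

/-- A subgroup is compact open if its carrier set is compact and open. -/
def Subgroup.IsCompactOpen [Group G] [TopologicalSpace G] (U : Subgroup G) : Prop :=
  IsCompact (U : Set G) ∧ IsOpen (U : Set G)

/-- The scale `s(g) = min_U [gUg⁻¹ : gUg⁻¹ ∩ U]`, minimum over compact open subgroups. -/
noncomputable def scale [Group G] [TopologicalSpace G] (g : G) : ℕ :=
  sInf { n : ℕ | ∃ U : Subgroup G, U.IsCompactOpen ∧ n = U.relIndex (conjSubgroup g U) }

section Aux

variable [Group G]

lemma aux_image_mul_right_smul (a h : G) (s : Set G) :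
    (fun x => x * h) '' (a • s) = a • ((fun x => x * h) '' s) := by
  simp only [← Set.image_smul, Set.image_image, smul_eq_mul, mul_assoc]

/-- Coset decomposition of `K` along `H ⊓ K`. -/
lemma aux_subgroup_decomp (H K : Subgroup G) :
    (K : Set G) = ⋃ q : K ⧸ H.subgroupOf K,
      ((Quotient.out q : K) : G) • ((H ⊓ K : Subgroup G) : Set G) := by
  ext x
  simp only [Set.mem_iUnion]
  constructor
  · intro hx
    refine ⟨QuotientGroup.mk (⟨x, hx⟩ : K), ?_⟩
    rw [Set.mem_smul_set_iff_inv_smul_mem]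
    have h1 : (Quotient.out (QuotientGroup.mk (⟨x, hx⟩ : K) : K ⧸ H.subgroupOf K))⁻¹
        * (⟨x, hx⟩ : K) ∈ H.subgroupOf K := by
      rw [← QuotientGroup.eq]
      exact QuotientGroup.out_eq' _
    have h2 := Subgroup.mem_subgroupOf.mp h1
    have h3 : ((Quotient.out (QuotientGroup.mk (⟨x, hx⟩ : K) : K ⧸ H.subgroupOf K) : K) : G)⁻¹
        * x ∈ K := K.mul_mem (K.inv_mem (SetLike.coe_mem _)) hx
    simpa [Subgroup.mem_inf, smul_eq_mul] using ⟨h2, h3⟩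
  · rintro ⟨q, hq⟩
    obtain ⟨w, hw, rfl⟩ := hq
    exact K.mul_mem (Quotient.out q : K).2 (Subgroup.mem_inf.mp hw).2

lemma aux_subgroup_disjoint (H K : Subgroup G) :
    Pairwise (Function.onFun Disjoint fun q : K ⧸ H.subgroupOf K =>
      ((Quotient.out q : K) : G) • ((H ⊓ K : Subgroup G) : Set G)) := by
  intro q q' hne
  rw [Function.onFun, Set.disjoint_left]
  rintro x hx hx'
  apply hne
  obtain ⟨w, hw, rfl⟩ := hx
  rw [Set.mem_smul_set_iff_inv_smul_mem] at hx'
  have hw' : ((Quotient.out q' : K) : G)⁻¹ * (((Quotient.out q : K) : G) * w) ∈ H ⊓ K := hx'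
  have hwH : w ∈ H ⊓ K := hw
  have hkey : ((Quotient.out q' : K) : G)⁻¹ * ((Quotient.out q : K) : G) ∈ H ⊓ K := by
    have := (H ⊓ K).mul_mem hw' ((H ⊓ K).inv_mem hwH)
    simpa [mul_assoc] using this
  rw [← QuotientGroup.out_eq' q, ← QuotientGroup.out_eq' q', QuotientGroup.eq]
  rw [Subgroup.mem_subgroupOf]
  have h2 := (Subgroup.mem_inf.mp ((H ⊓ K).inv_mem hkey)).1
  simpa [mul_inv_rev] using h2

end Aux

section Meas

variable [Group G] [MeasurableSpace G]

/-- If `H` has finite relative index in `K`, then any right translate of `K` has measure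
`relIndex` times the corresponding translate of `H ⊓ K`. -/
lemma aux_measure_image_mul_right (μ : Measure G) [μ.IsMulLeftInvariant] [MeasurableMul G]
    (H K : Subgroup G) (hHK : MeasurableSet ((H ⊓ K : Subgroup G) : Set G))
    (hfin : H.relIndex K ≠ 0) (h : G) :
    μ ((fun x => x * h) '' (K : Set G)) =
      (H.relIndex K : ℝ≥0∞) * μ ((fun x => x * h) '' ((H ⊓ K : Subgroup G) : Set G)) := by
  have hfinQ : Finite (K ⧸ H.subgroupOf K) := by
    apply Nat.finite_of_card_ne_zero
    rwa [← Subgroup.index_eq_card]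
  haveI := Fintype.ofFinite (K ⧸ H.subgroupOf K)
  set W : Set G := ((H ⊓ K : Subgroup G) : Set G) with hW
  have hT : MeasurableSet ((fun x => x * h) '' W) := by
    have : (fun x => x * h) '' W = (fun x => x * h⁻¹) ⁻¹' W := Set.image_mul_right
    rw [this]
    exact hHK.preimage (measurable_mul_const h⁻¹)
  have key : (fun x => x * h) '' (K : Set G) =
      ⋃ q : K ⧸ H.subgroupOf K, ((Quotient.out q : K) : G) • ((fun x => x * h) '' W) := by
    rw [aux_subgroup_decomp H K, Set.image_iUnion]
    exact Set.iUnion_congr fun q => aux_image_mul_right_smul _ _ _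
  have hdis : Pairwise (Function.onFun Disjoint fun q : K ⧸ H.subgroupOf K =>
      ((Quotient.out q : K) : G) • ((fun x => x * h) '' W)) := by
    intro q q' hne
    have hd := aux_subgroup_disjoint H K hne
    rw [Function.onFun] at hd ⊢
    rw [← aux_image_mul_right_smul, ← aux_image_mul_right_smul]
    exact (Set.disjoint_image_iff (mul_left_injective h)).mpr hd
  rw [key, measure_iUnion hdis (fun q => hT.const_smul _)]
  simp only [measure_smul]
  rw [tsum_fintype]
  rw [Finset.sum_const, Finset.card_univ, nsmul_eq_mul]
  congr 2
  rw [Subgroup.relIndex, Subgroup.index_eq_card, Nat.card_eq_fintype_card]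

lemma aux_measure_subgroup (μ : Measure G) [μ.IsMulLeftInvariant] [MeasurableMul G]
    (H K : Subgroup G) (hHK : MeasurableSet ((H ⊓ K : Subgroup G) : Set G))
    (hfin : H.relIndex K ≠ 0) :
    μ (K : Set G) = (H.relIndex K : ℝ≥0∞) * μ ((H ⊓ K : Subgroup G) : Set G) := by
  have := aux_measure_image_mul_right μ H K hHK hfin 1
  simpa [mul_one] using this

end Meas

section Top

variable [Group G] [TopologicalSpace G] [IsTopologicalGroup G]

lemma aux_relIndex_ne_zero {H K : Subgroup G} (hH : IsOpen (H : Set G))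
    (hK : IsCompact (K : Set G)) : H.relIndex K ≠ 0 := by
  have hcover : (K : Set G) ⊆ ⋃ k : K, (k : G) • (H : Set G) := by
    intro x hx
    refine Set.mem_iUnion.mpr ⟨⟨x, hx⟩, ?_⟩
    rw [Set.mem_smul_set_iff_inv_smul_mem]
    simpa [smul_eq_mul] using H.one_mem
  obtain ⟨t, ht⟩ := hK.elim_finite_subcover (fun k : K => (k : G) • (H : Set G))
    (fun k => hH.smul _) hcover
  have hfinQ : Finite (K ⧸ H.subgroupOf K) := by
    have hsurj : Function.Surjective
        (fun k : t => (QuotientGroup.mk (k : K) : K ⧸ H.subgroupOf K)) := by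
      intro q
      have hmem : ((Quotient.out q : K) : G) ∈ ⋃ k ∈ t, (k : G) • (H : Set G) :=
        ht (SetLike.coe_mem _)
      obtain ⟨k, hk, hmemk⟩ := Set.mem_iUnion₂.mp hmem
      refine ⟨⟨k, hk⟩, ?_⟩
      rw [← QuotientGroup.out_eq' q, QuotientGroup.eq, Subgroup.mem_subgroupOf]
      have := Set.mem_smul_set_iff_inv_smul_mem.mp hmemk
      simpa [smul_eq_mul] using this
    exact Finite.of_surjective _ hsurj
  exact Subgroup.index_ne_zero_of_finite

lemma aux_conj_coe (g : G) (U : Subgroup G) :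
    (conjSubgroup g U : Set G) = (fun x => g * x * g⁻¹) '' (U : Set G) := by
  ext x
  simp [conjSubgroup, Subgroup.mem_map]

lemma aux_conj_coe' (g : G) (U : Subgroup G) :
    (conjSubgroup g U : Set G) = g • ((fun x => x * g⁻¹) '' (U : Set G)) := by
  rw [aux_conj_coe, ← Set.image_smul, Set.image_image]
  simp only [smul_eq_mul, mul_assoc]

lemma aux_conj_conj (g : G) (U : Subgroup G) : conjSubgroup g⁻¹ (conjSubgroup g U) = U := by
  ext x
  simp only [conjSubgroup, Subgroup.mem_map, MulEquiv.coe_toMonoidHom, MulAut.conj_apply]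
  constructor
  · rintro ⟨y, ⟨z, hz, rfl⟩, rfl⟩
    simpa [mul_assoc] using hz
  · intro hx
    exact ⟨g * x * g⁻¹, ⟨x, hx, rfl⟩, by group⟩

lemma aux_conj_isCompactOpen (g : G) {U : Subgroup G} (hU : U.IsCompactOpen) :
    (conjSubgroup g U).IsCompactOpen := by
  constructor
  · rw [aux_conj_coe]
    exact hU.1.image (by continuity)
  · have : (conjSubgroup g U : Set G) = (fun x => g⁻¹ * x * g) ⁻¹' (U : Set G) := by
      rw [aux_conj_coe]
      ext x
      constructor
      · rintro ⟨y, hy, rfl⟩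
        simpa [mul_assoc] using hy
      · intro hx
        exact ⟨g⁻¹ * x * g, hx, by group⟩
    rw [this]
    exact hU.2.preimage (by continuity)

lemma aux_inf_isCompactOpen {U V : Subgroup G} [T2Space G] (hU : U.IsCompactOpen)
    (hV : V.IsCompactOpen) : (U ⊓ V).IsCompactOpen := by
  constructor
  · rw [Subgroup.coe_inf]
    exact hU.1.inter_right (hV.1.isClosed)
  · rw [Subgroup.coe_inf]
    exact hU.2.inter hV.2

end Top

section VanDantzig

variable [Group G] [TopologicalSpace G] [IsTopologicalGroup G]

lemma aux_exist_mul_closure_nhd {W : Set G} (Wcomp : IsCompact W) (Wopen : IsOpen W) :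
    ∃ T ∈ nhds (1 : G), W * T ⊆ W := by
  apply Wcomp.induction_on (p := fun S ↦ ∃ T ∈ nhds (1 : G), S * T ⊆ W)
    ⟨Set.univ, by simp only [Filter.univ_mem, Set.empty_mul, Set.empty_subset, and_self]⟩
    (fun _ _ huv ⟨T, hT, mem⟩ ↦ ⟨T, hT, (Set.mul_subset_mul_right huv).trans mem⟩)
    (fun U V ⟨T₁, hT₁, mem1⟩ ⟨T₂, hT₂, mem2⟩ ↦ ⟨T₁ ∩ T₂, Filter.inter_mem hT₁ hT₂, by
      rw [Set.union_mul]
      exact Set.union_subset ((Set.mul_subset_mul_left Set.inter_subset_left).trans mem1)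
        ((Set.mul_subset_mul_left Set.inter_subset_right).trans mem2)⟩)
  intro x memW
  have hx : (x, 1) ∈ (fun p : G × G ↦ p.1 * p.2) ⁻¹' W := by simp [memW]
  rcases isOpen_prod_iff.mp (continuous_mul.isOpen_preimage W Wopen) x 1 hx with
    ⟨U, V, Uopen, Vopen, xmemU, onememV, prodsub⟩
  have h6 : U * V ⊆ W := Set.mul_subset_iff.mpr fun _ hx' _ hy ↦ prodsub (Set.mk_mem_prod hx' hy)
  exact ⟨U ∩ W, ⟨U, Uopen.mem_nhds xmemU, W, fun _ a ↦ a, rfl⟩, V,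
    Vopen.mem_nhds onememV, fun _ a ↦ h6 ((Set.mul_subset_mul_right Set.inter_subset_left) a)⟩

lemma aux_exists_compactOpen_subgroup [T2Space G] {W : Set G} (Wcomp : IsCompact W)
    (Wopen : IsOpen W) (einW : (1 : G) ∈ W) : ∃ U : Subgroup G, U.IsCompactOpen := by
  obtain ⟨S, Smemnhds, mulclose⟩ := aux_exist_mul_closure_nhd Wcomp Wopen
  rcases mem_nhds_iff.mp Smemnhds with ⟨U0, UsubS, Uopen, onememU⟩
  set V : Set G := U0 ∩ U0⁻¹ with hVdef
  have Vnhd : V ∈ nhds (1 : G) := by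
    apply Filter.inter_mem (Uopen.mem_nhds onememU)
    simpa using Uopen.inv.mem_nhds (by simpa using onememU : (1 : G) ∈ U0⁻¹)
  have Vinv : V⁻¹ = V := by
    simp [hVdef, Set.inter_comm]
  have Vopen : IsOpen V := Uopen.inter Uopen.inv
  have Vmul : W * V ⊆ W :=
    fun a ha ↦ mulclose (Set.mul_subset_mul_left UsubS
      (Set.mul_subset_mul_left Set.inter_subset_left ha))
  let Sgrp : Subgroup G := {
    carrier := ⋃ n, V ^ (n + 1)
    mul_mem' := fun ha hb ↦ by
      rcases Set.mem_iUnion.mp ha with ⟨k, hk⟩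
      rcases Set.mem_iUnion.mp hb with ⟨l, hl⟩
      apply Set.mem_iUnion.mpr
      use k + 1 + l
      rw [add_assoc, pow_add]
      exact Set.mul_mem_mul hk hl
    one_mem' := by
      apply Set.mem_iUnion.mpr
      use 0
      simp [mem_of_mem_nhds Vnhd]
    inv_mem' := fun ha ↦ by
      rcases Set.mem_iUnion.mp ha with ⟨k, hk⟩
      apply Set.mem_iUnion.mpr
      use k
      rw [← Vinv]
      simpa only [inv_pow, Set.mem_inv, inv_inv] using hk }
  have hopen : IsOpen (⋃ n, V ^ (n + 1)) := by
    refine isOpen_iUnion fun n ↦ ?_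
    rw [pow_succ]
    exact Vopen.mul_left
  have mulVpow (n : ℕ) : W * V ^ (n + 1) ⊆ W := by
    induction' n with n ih
    · simpa using Vmul
    · rw [pow_succ, ← mul_assoc]
      exact (Set.mul_subset_mul_right ih).trans Vmul
  have hsubW : (⋃ n, V ^ (n + 1)) ⊆ W := by
    refine Set.iUnion_subset fun n a ha ↦ mulVpow n ?_
    rw [Set.mem_mul]
    exact ⟨1, einW, a, ha, one_mul a⟩
  refine ⟨Sgrp, ?_, hopen⟩
  have hclosed : IsClosed (Sgrp : Set G) := Subgroup.isClosed_of_isOpen Sgrp hopen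
  exact Wcomp.of_isClosed_subset hclosed hsubW

lemma aux_exists_isCompactOpen [LocallyCompactSpace G] [T2Space G] [TotallyDisconnectedSpace G] :
    ∃ U : Subgroup G, U.IsCompactOpen := by
  obtain ⟨K, hKc, hKn⟩ := exists_compact_mem_nhds (1 : G)
  obtain ⟨W, hWclopen, hW1, hWK⟩ :=
    (loc_compact_Haus_tot_disc_of_zero_dim).mem_nhds_iff.mp hKn
  have hWcomp : IsCompact W := hKc.of_isClosed_subset hWclopen.1 hWK
  exact aux_exists_compactOpen_subgroup hWcomp hWclopen.2 hW1

end VanDantzig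

section Main

variable [Group G] [TopologicalSpace G] [IsTopologicalGroup G] [T2Space G]
  [MeasurableSpace G] [BorelSpace G]

lemma aux_star (μ : Measure G) [μ.IsHaarMeasure] (g : G) (U V : Subgroup G)
    (hU : U.IsCompactOpen) (hV : V.IsCompactOpen) :
    (V.relIndex (conjSubgroup g V) : ℝ≥0∞) * μ (U : Set G) =
      ((conjSubgroup g V).relIndex V : ℝ≥0∞) * μ ((fun x => x * g⁻¹) '' (U : Set G)) := by
  have hC := aux_conj_isCompactOpen g hV
  set C := conjSubgroup g V with hCdef
  have hWa := aux_inf_isCompactOpen hV hC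
  have hWb := aux_inf_isCompactOpen hC hV
  have hfina : V.relIndex C ≠ 0 := aux_relIndex_ne_zero hV.2 hC.1
  have hfinb : C.relIndex V ≠ 0 := aux_relIndex_ne_zero hC.2 hV.1
  have L1 : μ (C : Set G) = (V.relIndex C : ℝ≥0∞) * μ ((V ⊓ C : Subgroup G) : Set G) :=
    aux_measure_subgroup μ V C hWa.2.measurableSet hfina
  have L2 : μ (C : Set G) = μ ((fun x => x * g⁻¹) '' (V : Set G)) := by
    rw [hCdef, aux_conj_coe', measure_smul]
  have L3 : μ (V : Set G) = (C.relIndex V : ℝ≥0∞) * μ ((C ⊓ V : Subgroup G) : Set G) :=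
    aux_measure_subgroup μ C V hWb.2.measurableSet hfinb
  have hWab : ((V ⊓ C : Subgroup G) : Set G) = ((C ⊓ V : Subgroup G) : Set G) := by
    rw [inf_comm]
  have hDco := aux_inf_isCompactOpen hU hV
  have hD'co := aux_inf_isCompactOpen hV hU
  have hr1 : U.relIndex V ≠ 0 := aux_relIndex_ne_zero hU.2 hV.1
  have hr2 : V.relIndex U ≠ 0 := aux_relIndex_ne_zero hV.2 hU.1
  have R1 : μ (V : Set G) = (U.relIndex V : ℝ≥0∞) * μ ((U ⊓ V : Subgroup G) : Set G) :=
    aux_measure_subgroup μ U V hDco.2.measurableSet hr1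
  have R1' : μ ((fun x => x * g⁻¹) '' (V : Set G)) =
      (U.relIndex V : ℝ≥0∞) * μ ((fun x => x * g⁻¹) '' ((U ⊓ V : Subgroup G) : Set G)) :=
    aux_measure_image_mul_right μ U V hDco.2.measurableSet hr1 g⁻¹
  have R2 : μ (U : Set G) = (V.relIndex U : ℝ≥0∞) * μ ((V ⊓ U : Subgroup G) : Set G) :=
    aux_measure_subgroup μ V U hD'co.2.measurableSet hr2
  have R2' : μ ((fun x => x * g⁻¹) '' (U : Set G)) =
      (V.relIndex U : ℝ≥0∞) * μ ((fun x => x * g⁻¹) '' ((V ⊓ U : Subgroup G) : Set G)) :=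
    aux_measure_image_mul_right μ V U hD'co.2.measurableSet hr2 g⁻¹
  have hDD : ((U ⊓ V : Subgroup G) : Set G) = ((V ⊓ U : Subgroup G) : Set G) := by
    rw [inf_comm]
  have h0 : μ ((V ⊓ C : Subgroup G) : Set G) ≠ 0 :=
    hWa.2.measure_ne_zero μ ⟨1, (V ⊓ C).one_mem⟩
  have htop : μ ((V ⊓ C : Subgroup G) : Set G) ≠ ⊤ := hWa.1.measure_lt_top.ne
  rw [← ENNReal.mul_right_inj h0 htop]
  calc μ ((V ⊓ C : Subgroup G) : Set G) * ((V.relIndex C : ℝ≥0∞) * μ (U : Set G))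
      = μ (C : Set G) * μ (U : Set G) := by rw [L1]; ring
    _ = μ ((fun x => x * g⁻¹) '' (V : Set G)) * μ (U : Set G) := by rw [L2]
    _ = ((U.relIndex V : ℝ≥0∞) * μ ((fun x => x * g⁻¹) '' ((U ⊓ V : Subgroup G) : Set G))) *
        ((V.relIndex U : ℝ≥0∞) * μ ((V ⊓ U : Subgroup G) : Set G)) := by rw [R1', R2]
    _ = ((U.relIndex V : ℝ≥0∞) * μ ((U ⊓ V : Subgroup G) : Set G)) *
        ((V.relIndex U : ℝ≥0∞) * μ ((fun x => x * g⁻¹) '' ((V ⊓ U : Subgroup G) : Set G))) := by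
        rw [hDD]; ring
    _ = μ (V : Set G) * μ ((fun x => x * g⁻¹) '' (U : Set G)) := by rw [← R1, ← R2']
    _ = μ ((V ⊓ C : Subgroup G) : Set G) *
        ((C.relIndex V : ℝ≥0∞) * μ ((fun x => x * g⁻¹) '' (U : Set G))) := by
        rw [L3, hWab]; ring

end Main

/-- `s(g) · μ(U) = s(g⁻¹) · μ(Ug⁻¹)`, i.e. `s(g)/s(g⁻¹) = Δ(g)`. -/
theorem scale_ratio_eq_modular
    [Group G] [TopologicalSpace G] [IsTopologicalGroup G] [LocallyCompactSpace G] [T2Space G]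
    [TotallyDisconnectedSpace G] [MeasurableSpace G] [BorelSpace G]
    (μ : Measure G) [μ.IsHaarMeasure]
    (g : G) (U : Subgroup G) (hU : U.IsCompactOpen) :
    (scale g : ℝ≥0∞) * μ (U : Set G) =
      (scale g⁻¹ : ℝ≥0∞) * μ ((fun x => x * g⁻¹) '' (U : Set G)) := by
  obtain ⟨V₀, hV₀co⟩ := aux_exists_isCompactOpen (G := G)
  have hne_g : { n : ℕ | ∃ W : Subgroup G, W.IsCompactOpen ∧
      n = W.relIndex (conjSubgroup g W) }.Nonempty := ⟨_, V₀, hV₀co, rfl⟩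
  have hne_gi : { n : ℕ | ∃ W : Subgroup G, W.IsCompactOpen ∧
      n = W.relIndex (conjSubgroup g⁻¹ W) }.Nonempty := ⟨_, V₀, hV₀co, rfl⟩
  have hmem_g : scale g ∈ { n : ℕ | ∃ W : Subgroup G, W.IsCompactOpen ∧
      n = W.relIndex (conjSubgroup g W) } := Nat.sInf_mem hne_g
  have hmem_gi : scale g⁻¹ ∈ { n : ℕ | ∃ W : Subgroup G, W.IsCompactOpen ∧
      n = W.relIndex (conjSubgroup g⁻¹ W) } := Nat.sInf_mem hne_gi
  obtain ⟨V₁, hV₁co, hV₁⟩ := hmem_g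
  obtain ⟨V₂', hV₂co, hV₂⟩ := hmem_gi
  apply le_antisymm
  · -- scale g * μ U ≤ scale g⁻¹ * μ (U g⁻¹)
    set V₂ : Subgroup G := conjSubgroup g⁻¹ V₂' with hv2
    have hV₂cco : V₂.IsCompactOpen := aux_conj_isCompactOpen g⁻¹ hV₂co
    have hconj : conjSubgroup g V₂ = V₂' := by
      have h := aux_conj_conj g⁻¹ V₂'
      rwa [inv_inv] at h
    have hstar := aux_star μ g U V₂ hU hV₂cco
    have hle : (scale g : ℝ≥0∞) ≤ (V₂.relIndex (conjSubgroup g V₂) : ℝ≥0∞) :=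
      Nat.cast_le.mpr (Nat.sInf_le ⟨V₂, hV₂cco, rfl⟩)
    calc (scale g : ℝ≥0∞) * μ (U : Set G)
        ≤ (V₂.relIndex (conjSubgroup g V₂) : ℝ≥0∞) * μ (U : Set G) :=
          mul_le_mul_left hle _
      _ = ((conjSubgroup g V₂).relIndex V₂ : ℝ≥0∞) *
          μ ((fun x => x * g⁻¹) '' (U : Set G)) := hstar
      _ = (scale g⁻¹ : ℝ≥0∞) * μ ((fun x => x * g⁻¹) '' (U : Set G)) := by
          rw [hconj, hv2, ← hV₂]
  · -- scale g⁻¹ * μ (U g⁻¹) ≤ scale g * μ U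
    have hstar := aux_star μ g U V₁ hU hV₁co
    have hmemb : (conjSubgroup g V₁).relIndex V₁ ∈ { n : ℕ | ∃ W : Subgroup G,
        W.IsCompactOpen ∧ n = W.relIndex (conjSubgroup g⁻¹ W) } :=
      ⟨conjSubgroup g V₁, aux_conj_isCompactOpen g hV₁co, by rw [aux_conj_conj]⟩
    have hle : (scale g⁻¹ : ℝ≥0∞) ≤ ((conjSubgroup g V₁).relIndex V₁ : ℝ≥0∞) :=
      Nat.cast_le.mpr (Nat.sInf_le hmemb)
    calc (scale g⁻¹ : ℝ≥0∞) * μ ((fun x => x * g⁻¹) '' (U : Set G))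
        ≤ ((conjSubgroup g V₁).relIndex V₁ : ℝ≥0∞) *
          μ ((fun x => x * g⁻¹) '' (U : Set G)) := mul_le_mul_left hle _
      _ = (V₁.relIndex (conjSubgroup g V₁) : ℝ≥0∞) * μ (U : Set G) := hstar.symm
      _ = (scale g : ℝ≥0∞) * μ (U : Set G) := by rw [← hV₁]
end

section
/- Let G be a totally disconnected locally compact Hausdorff topological group, g ∈ G, and U a compact open subgroup of G. Then s(g) = [gUg⁻¹ : gUg⁻¹ ∩ U] if and only if s(g⁻¹) = [g⁻¹Ug : g⁻¹Ug ∩ U]; that is, g and g⁻¹ have the same minimising subgroups. -/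
open MeasureTheory Pointwise

variable {G : Type*}

section Aux

variable [Group G] [TopologicalSpace G] [IsTopologicalGroup G]

lemma relindex_ne_zero_aux {A B : Subgroup G} (hA : IsCompact (A : Set G))
    (hB : IsOpen (B : Set G)) : B.relIndex A ≠ 0 := by
  haveI : CompactSpace A := isCompact_iff_compactSpace.mp hA
  have hOpen : IsOpen ((B.subgroupOf A : Subgroup A) : Set A) := by
    have : ((B.subgroupOf A : Subgroup A) : Set A) = Subtype.val ⁻¹' (B : Set G) := rfl
    rw [this]
    exact hB.preimage continuous_subtype_val
  haveI := Subgroup.quotient_finite_of_isOpen (B.subgroupOf A) hOpen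
  exact Subgroup.index_ne_zero_of_finite

lemma Subgroup.IsCompactOpen.inf {A B : Subgroup G} (hA : A.IsCompactOpen) (hB : B.IsCompactOpen) :
    (A ⊓ B).IsCompactOpen := by
  constructor
  · rw [Subgroup.coe_inf]
    exact hA.1.inter_right (B.isClosed_of_isOpen hB.2)
  · rw [Subgroup.coe_inf]
    exact hA.2.inter hB.2

lemma conjSubgroup_isCompactOpen {U : Subgroup G} (g : G) (hU : U.IsCompactOpen) :
    (conjSubgroup g U).IsCompactOpen := by
  have hset : ((conjSubgroup g U : Subgroup G) : Set G)
      = ((Homeomorph.mulLeft g).trans (Homeomorph.mulRight g⁻¹)) '' (U : Set G) := by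
    ext x
    simp [conjSubgroup, Subgroup.mem_map, Set.mem_image]
  constructor
  · rw [hset]; exact hU.1.image (Homeomorph.continuous _)
  · rw [hset]; exact (Homeomorph.isOpen_image _).mpr hU.2

lemma relindex_map_conj (g : G) (A B : Subgroup G) :
    (conjSubgroup g A).relIndex (conjSubgroup g B) = A.relIndex B := by
  have hinj : Function.Injective (MulAut.conj g).toMonoidHom := (MulAut.conj g).injective
  have := Subgroup.relIndex_comap (MulAut.conj g).toMonoidHom
    (H := conjSubgroup g A) (K := B)
  rw [show Subgroup.comap (MulAut.conj g).toMonoidHom (conjSubgroup g A) = A from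
    Subgroup.comap_map_eq_self_of_injective hinj A] at this
  exact this.symm

lemma conjSubgroup_conjSubgroup_inv (g : G) (U : Subgroup G) :
    conjSubgroup g (conjSubgroup g⁻¹ U) = U := by
  simp only [conjSubgroup, Subgroup.map_map]
  convert Subgroup.map_id U
  ext x
  simp only [MonoidHom.comp_apply, MulEquiv.coe_toMonoidHom, MulAut.conj_apply,
    MonoidHom.id_apply]
  group

end Aux

section Main

variable [Group G] [TopologicalSpace G] [IsTopologicalGroup G]

set_option linter.unusedSectionVars false

/-- The triangle identity for relative indices of compact open subgroups. -/
lemma tri_identity (A B C : Subgroup G) (hA : A.IsCompactOpen) (hB : B.IsCompactOpen)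
    (hC : C.IsCompactOpen) :
    B.relIndex A * (C.relIndex B * A.relIndex C)
      = C.relIndex A * (B.relIndex C * A.relIndex B) := by
  have hDAB : A ⊓ B ⊓ C ≤ A ⊓ B := inf_le_left
  have hDBC : A ⊓ B ⊓ C ≤ B ⊓ C := le_inf (inf_le_left.trans inf_le_right) inf_le_right
  have hDCA : A ⊓ B ⊓ C ≤ C ⊓ A := le_inf inf_le_right (inf_le_left.trans inf_le_left)
  have e1 : (A ⊓ B ⊓ C).relIndex (A ⊓ B) * B.relIndex A = (A ⊓ B ⊓ C).relIndex A := by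
    rw [← Subgroup.inf_relIndex_left (H := A) (K := B)]
    exact Subgroup.relIndex_mul_relIndex _ _ _ hDAB inf_le_left
  have e2 : (A ⊓ B ⊓ C).relIndex (A ⊓ B) * A.relIndex B = (A ⊓ B ⊓ C).relIndex B := by
    rw [← Subgroup.inf_relIndex_right (H := A) (K := B)]
    exact Subgroup.relIndex_mul_relIndex _ _ _ hDAB inf_le_right
  have e3 : (A ⊓ B ⊓ C).relIndex (B ⊓ C) * C.relIndex B = (A ⊓ B ⊓ C).relIndex B := by
    rw [← Subgroup.inf_relIndex_left (H := B) (K := C)]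
    exact Subgroup.relIndex_mul_relIndex _ _ _ hDBC inf_le_left
  have e4 : (A ⊓ B ⊓ C).relIndex (B ⊓ C) * B.relIndex C = (A ⊓ B ⊓ C).relIndex C := by
    rw [← Subgroup.inf_relIndex_right (H := B) (K := C)]
    exact Subgroup.relIndex_mul_relIndex _ _ _ hDBC inf_le_right
  have e5 : (A ⊓ B ⊓ C).relIndex (C ⊓ A) * A.relIndex C = (A ⊓ B ⊓ C).relIndex C := by
    rw [← Subgroup.inf_relIndex_left (H := C) (K := A)]
    exact Subgroup.relIndex_mul_relIndex _ _ _ hDCA inf_le_left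
  have e6 : (A ⊓ B ⊓ C).relIndex (C ⊓ A) * C.relIndex A = (A ⊓ B ⊓ C).relIndex A := by
    rw [← Subgroup.inf_relIndex_right (H := C) (K := A)]
    exact Subgroup.relIndex_mul_relIndex _ _ _ hDCA inf_le_right
  have hDopen : IsOpen ((A ⊓ B ⊓ C : Subgroup G) : Set G) := by
    simp only [Subgroup.coe_inf]
    exact (hA.2.inter hB.2).inter hC.2
  have hmAB : (A ⊓ B ⊓ C).relIndex (A ⊓ B) ≠ 0 := relindex_ne_zero_aux (hA.inf hB).1 hDopen
  have hmBC : (A ⊓ B ⊓ C).relIndex (B ⊓ C) ≠ 0 := relindex_ne_zero_aux (hB.inf hC).1 hDopen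
  have hmCA : (A ⊓ B ⊓ C).relIndex (C ⊓ A) ≠ 0 := relindex_ne_zero_aux (hC.inf hA).1 hDopen
  have hm : (A ⊓ B ⊓ C).relIndex (A ⊓ B) * (A ⊓ B ⊓ C).relIndex (B ⊓ C)
      * (A ⊓ B ⊓ C).relIndex (C ⊓ A) ≠ 0 := mul_ne_zero (mul_ne_zero hmAB hmBC) hmCA
  apply Nat.eq_of_mul_eq_mul_left (Nat.pos_of_ne_zero hm)
  calc (A ⊓ B ⊓ C).relIndex (A ⊓ B) * (A ⊓ B ⊓ C).relIndex (B ⊓ C)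
        * (A ⊓ B ⊓ C).relIndex (C ⊓ A)
        * (B.relIndex A * (C.relIndex B * A.relIndex C))
      = ((A ⊓ B ⊓ C).relIndex (A ⊓ B) * B.relIndex A)
          * (((A ⊓ B ⊓ C).relIndex (B ⊓ C) * C.relIndex B)
            * ((A ⊓ B ⊓ C).relIndex (C ⊓ A) * A.relIndex C)) := by ring
    _ = (A ⊓ B ⊓ C).relIndex A * ((A ⊓ B ⊓ C).relIndex B * (A ⊓ B ⊓ C).relIndex C) := by
        rw [e1, e3, e5]
    _ = ((A ⊓ B ⊓ C).relIndex (C ⊓ A) * C.relIndex A)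
          * (((A ⊓ B ⊓ C).relIndex (B ⊓ C) * B.relIndex C)
            * ((A ⊓ B ⊓ C).relIndex (A ⊓ B) * A.relIndex B)) := by rw [e6, e4, e2]; ring
    _ = _ := by ring

/-- The cross identity `a(U) b(V) = a(V) b(U)`. -/
lemma cross_identity (g : G) (U V : Subgroup G) (hU : U.IsCompactOpen) (hV : V.IsCompactOpen) :
    U.relIndex (conjSubgroup g U) * V.relIndex (conjSubgroup g⁻¹ V)
      = V.relIndex (conjSubgroup g V) * U.relIndex (conjSubgroup g⁻¹ U) := by
  set Ug := conjSubgroup g U with hUg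
  set Vg := conjSubgroup g V with hVg
  have hUgco : Ug.IsCompactOpen := conjSubgroup_isCompactOpen g hU
  have hVgco : Vg.IsCompactOpen := conjSubgroup_isCompactOpen g hV
  have hbU : U.relIndex (conjSubgroup g⁻¹ U) = Ug.relIndex U := by
    rw [hUg, ← relindex_map_conj g U (conjSubgroup g⁻¹ U), conjSubgroup_conjSubgroup_inv]
  have hbV : V.relIndex (conjSubgroup g⁻¹ V) = Vg.relIndex V := by
    rw [hVg, ← relindex_map_conj g V (conjSubgroup g⁻¹ V), conjSubgroup_conjSubgroup_inv]
  rw [hbU, hbV]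
  have eq1 := tri_identity Ug Vg V hUgco hVgco hV
  rw [hUg, hVg, relindex_map_conj g V U, relindex_map_conj g U V, ← hUg, ← hVg] at eq1
  -- eq1 : V.relIndex U * (V.relIndex Vg * Ug.relIndex V)
  --       = V.relIndex Ug * (Vg.relIndex V * U.relIndex V)
  have eq2 := tri_identity Ug U V hUgco hU hV
  -- eq2 : U.relIndex Ug * (V.relIndex U * Ug.relIndex V)
  --       = V.relIndex Ug * (U.relIndex V * Ug.relIndex U)
  have h1 : V.relIndex U ≠ 0 := relindex_ne_zero_aux hU.1 hV.2
  have h2 : Ug.relIndex V ≠ 0 := relindex_ne_zero_aux hV.1 hUgco.2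
  have h3 : V.relIndex Ug ≠ 0 := relindex_ne_zero_aux hUgco.1 hV.2
  have h4 : U.relIndex V ≠ 0 := relindex_ne_zero_aux hV.1 hU.2
  have hm : V.relIndex U * Ug.relIndex V * (V.relIndex Ug * U.relIndex V) ≠ 0 :=
    mul_ne_zero (mul_ne_zero h1 h2) (mul_ne_zero h3 h4)
  apply Nat.eq_of_mul_eq_mul_left (Nat.pos_of_ne_zero hm)
  calc V.relIndex U * Ug.relIndex V * (V.relIndex Ug * U.relIndex V)
        * (U.relIndex Ug * Vg.relIndex V)
      = (U.relIndex Ug * (V.relIndex U * Ug.relIndex V))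
          * (Vg.relIndex V * (V.relIndex Ug * U.relIndex V)) := by ring
    _ = (V.relIndex Ug * (U.relIndex V * Ug.relIndex U))
          * (Vg.relIndex V * (V.relIndex Ug * U.relIndex V)) := by rw [eq2]
    _ = (V.relIndex Ug * (Vg.relIndex V * U.relIndex V))
          * (Ug.relIndex U * (V.relIndex Ug * U.relIndex V)) := by ring
    _ = (V.relIndex U * (V.relIndex Vg * Ug.relIndex V))
          * (Ug.relIndex U * (V.relIndex Ug * U.relIndex V)) := by rw [← eq1]
    _ = V.relIndex U * Ug.relIndex V * (V.relIndex Ug * U.relIndex V)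
        * (V.relIndex Vg * Ug.relIndex U) := by ring

end Main

section Main2
variable [Group G] [TopologicalSpace G] [IsTopologicalGroup G]

lemma minimising_mp (g : G) (U : Subgroup G) (hU : U.IsCompactOpen)
    (h : scale g = U.relIndex (conjSubgroup g U)) :
    scale g⁻¹ = U.relIndex (conjSubgroup g⁻¹ U) := by
  set S' : Set ℕ :=
    { n : ℕ | ∃ W : Subgroup G, W.IsCompactOpen ∧ n = W.relIndex (conjSubgroup g⁻¹ W) } with hS'
  have hmemU : U.relIndex (conjSubgroup g⁻¹ U) ∈ S' := ⟨U, hU, rfl⟩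
  have hne : S'.Nonempty := ⟨_, hmemU⟩
  have hmem := Nat.sInf_mem hne
  obtain ⟨V, hV, hVeq⟩ := hmem
  have hle : U.relIndex (conjSubgroup g⁻¹ U) ≤ V.relIndex (conjSubgroup g⁻¹ V) := by
    have haUV : U.relIndex (conjSubgroup g U) ≤ V.relIndex (conjSubgroup g V) := by
      rw [← h]
      exact Nat.sInf_le ⟨V, hV, rfl⟩
    have hcross := cross_identity g U V hU hV
    have haV : V.relIndex (conjSubgroup g V) ≠ 0 :=
      relindex_ne_zero_aux (conjSubgroup_isCompactOpen g hV).1 hV.2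
    have : U.relIndex (conjSubgroup g⁻¹ U) * V.relIndex (conjSubgroup g V)
        ≤ V.relIndex (conjSubgroup g⁻¹ V) * V.relIndex (conjSubgroup g V) := by
      calc U.relIndex (conjSubgroup g⁻¹ U) * V.relIndex (conjSubgroup g V)
          = U.relIndex (conjSubgroup g U) * V.relIndex (conjSubgroup g⁻¹ V) := by
            rw [mul_comm, hcross]
        _ ≤ V.relIndex (conjSubgroup g V) * V.relIndex (conjSubgroup g⁻¹ V) :=
            Nat.mul_le_mul_right _ haUV
        _ = V.relIndex (conjSubgroup g⁻¹ V) * V.relIndex (conjSubgroup g V) := mul_comm _ _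
    exact Nat.le_of_mul_le_mul_right this (Nat.pos_of_ne_zero haV)
  have h1 : scale g⁻¹ ≤ U.relIndex (conjSubgroup g⁻¹ U) := Nat.sInf_le hmemU
  have h2 : U.relIndex (conjSubgroup g⁻¹ U) ≤ scale g⁻¹ := by
    rw [show scale g⁻¹ = sInf S' from rfl, hVeq] at *
    exact hle
  exact le_antisymm h1 h2

end Main2

/-- `U` is minimising for `g` iff it is minimising for `g⁻¹`. -/
theorem minimising_iff_minimising_inv
    [Group G] [TopologicalSpace G] [IsTopologicalGroup G] [LocallyCompactSpace G] [T2Space G]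
    [TotallyDisconnectedSpace G]
    (g : G) (U : Subgroup G) (hU : U.IsCompactOpen) :
    scale g = U.relIndex (conjSubgroup g U) ↔ scale g⁻¹ = U.relIndex (conjSubgroup g⁻¹ U) := by
  constructor
  · exact minimising_mp g U hU
  · intro h
    have := minimising_mp g⁻¹ U hU h
    rwa [inv_inv] at this
end

section
/- Let G be a totally disconnected locally compact Hausdorff topological group and g ∈ G. If U and V are compact open subgroups of G that are both tidy for g, then [V : V ∩ g⁻¹Vg] = [U : U ∩ g⁻¹Ug]; that is, the index [V : V ∩ g⁻¹Vg] does not depend on the choice of the tidy subgroup V. -/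
open MeasureTheory Pointwise

variable {G : Type*}

section ConjBasics

variable [Group G]

theorem mem_conjSubgroup {g x : G} {U : Subgroup G} :
    x ∈ conjSubgroup g U ↔ g⁻¹ * x * g ∈ U := by
  constructor
  · rintro ⟨y, hy, rfl⟩
    simpa [MulAut.conj, mul_assoc] using hy
  · intro h
    exact ⟨g⁻¹ * x * g, h, by simp [MulAut.conj, mul_assoc]⟩

theorem conjSubgroup_eq_comap (g : G) (U : Subgroup G) :
    conjSubgroup g U = U.comap (MulAut.conj g⁻¹).toMonoidHom := by
  ext x
  simp [mem_conjSubgroup, Subgroup.mem_comap, MulAut.conj, mul_assoc]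

theorem conjSubgroup_conjSubgroup (a b : G) (U : Subgroup G) :
    conjSubgroup a (conjSubgroup b U) = conjSubgroup (a * b) U := by
  ext x
  simp [mem_conjSubgroup, mul_assoc]

theorem conjSubgroup_one (U : Subgroup G) : conjSubgroup 1 U = U := by
  ext x; simp [mem_conjSubgroup]

theorem conjSubgroup_mono (g : G) {U V : Subgroup G} (h : U ≤ V) :
    conjSubgroup g U ≤ conjSubgroup g V := by
  intro x hx
  rw [mem_conjSubgroup] at hx ⊢
  exact h hx

theorem conjSubgroup_le_iff {g : G} {U V : Subgroup G} :
    conjSubgroup g U ≤ V ↔ U ≤ conjSubgroup g⁻¹ V := by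
  constructor
  · intro h x hx
    rw [mem_conjSubgroup]
    apply h
    rw [mem_conjSubgroup]
    simpa [mul_assoc] using hx
  · intro h x hx
    rw [mem_conjSubgroup] at hx
    have := h hx
    rw [mem_conjSubgroup] at this
    simpa [mul_assoc] using this

theorem conjSubgroup_inf (g : G) (U V : Subgroup G) :
    conjSubgroup g (U ⊓ V) = conjSubgroup g U ⊓ conjSubgroup g V := by
  ext x; simp [mem_conjSubgroup]

theorem conjSubgroup_iInf {ι : Sort*} (g : G) (s : ι → Subgroup G) :
    conjSubgroup g (⨅ i, s i) = ⨅ i, conjSubgroup g (s i) := by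
  ext x; simp [mem_conjSubgroup, Subgroup.mem_iInf]

theorem relindex_conjSubgroup (c : G) (H K : Subgroup G) :
    (conjSubgroup c H).relIndex (conjSubgroup c K) = H.relIndex K := by
  rw [conjSubgroup_eq_comap c H, Subgroup.relIndex_comap]
  show H.relIndex (conjSubgroup c⁻¹ (conjSubgroup c K)) = _
  rw [conjSubgroup_conjSubgroup, inv_mul_cancel, conjSubgroup_one]

end ConjBasics
/-- `U₊ = ⋂_{n ≥ 0} gⁿ U g⁻ⁿ`. -/
def plusSubgroup [Group G] (g : G) (U : Subgroup G) : Subgroup G :=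
  ⨅ n : ℕ, conjSubgroup (g ^ n) U

/-- `U₊₊ = ⋃_{n ≥ 0} gⁿ U₊ g⁻ⁿ` as a set. -/
def plusPlusSet [Group G] (g : G) (U : Subgroup G) : Set G :=
  ⋃ n : ℕ, ((conjSubgroup (g ^ n) (plusSubgroup g U) : Subgroup G) : Set G)

section PlusBasics

variable [Group G] (g : G) (U : Subgroup G)

theorem plusSubgroup_le_conj_pow (n : ℕ) : plusSubgroup g U ≤ conjSubgroup (g ^ n) U :=
  iInf_le _ n

theorem plusSubgroup_le : plusSubgroup g U ≤ U := by
  have := plusSubgroup_le_conj_pow g U 0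
  rwa [pow_zero, conjSubgroup_one] at this

theorem mem_plusSubgroup {x : G} : x ∈ plusSubgroup g U ↔ ∀ n : ℕ, x ∈ conjSubgroup (g ^ n) U :=
  Subgroup.mem_iInf

theorem conj_pow_plusSubgroup (n : ℕ) :
    conjSubgroup (g ^ n) (plusSubgroup g U) = ⨅ k : ℕ, conjSubgroup (g ^ (n + k)) U := by
  rw [plusSubgroup, conjSubgroup_iInf]
  congr 1; funext k
  rw [conjSubgroup_conjSubgroup, ← pow_add]

theorem plusSubgroup_le_conj : plusSubgroup g U ≤ conjSubgroup g (plusSubgroup g U) := by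
  have h := conj_pow_plusSubgroup g U 1
  rw [pow_one] at h
  rw [h, le_iInf_iff]
  exact fun k => plusSubgroup_le_conj_pow g U (1 + k)

theorem plusSubgroup_le_conj_pow_plus (n : ℕ) :
    plusSubgroup g U ≤ conjSubgroup (g ^ n) (plusSubgroup g U) := by
  rw [conj_pow_plusSubgroup, le_iInf_iff]
  exact fun k => plusSubgroup_le_conj_pow g U (n + k)

theorem conj_pow_plus_mono {m n : ℕ} (h : m ≤ n) :
    conjSubgroup (g ^ m) (plusSubgroup g U) ≤ conjSubgroup (g ^ n) (plusSubgroup g U) := by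
  rw [conj_pow_plusSubgroup g U m, conj_pow_plusSubgroup g U n, le_iInf_iff]
  intro k
  obtain ⟨j, rfl⟩ := Nat.exists_eq_add_of_le h
  have : m + (j + k) = m + j + k := by ring
  exact le_trans (iInf_le _ (j + k)) (by rw [this])

theorem inf_conj_plusSubgroup : U ⊓ conjSubgroup g (plusSubgroup g U) = plusSubgroup g U := by
  apply le_antisymm
  · intro x hx
    rw [mem_plusSubgroup]
    intro n
    rcases n with _ | n
    · simpa [conjSubgroup_one] using hx.1
    · have h := conj_pow_plusSubgroup g U 1
      rw [pow_one] at h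
      have h2 : x ∈ (⨅ k : ℕ, conjSubgroup (g ^ (1 + k)) U) := h ▸ hx.2
      rw [Subgroup.mem_iInf] at h2
      have := h2 n
      rwa [show 1 + n = n + 1 by ring] at this
  · exact le_inf (plusSubgroup_le g U) (plusSubgroup_le_conj g U)

theorem conj_neg_pow_plusSubgroup_le (n : ℕ) :
    conjSubgroup ((g ^ n)⁻¹) (plusSubgroup g U) ≤ plusSubgroup g U := by
  rw [conjSubgroup_le_iff, inv_inv]
  exact plusSubgroup_le_conj_pow_plus g U n

/-- partial intersections `U ∩ gUg⁻¹ ∩ ... ∩ gⁿUg⁻ⁿ` -/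
def partPlus [Group G] (g : G) (U : Subgroup G) : ℕ → Subgroup G
  | 0 => U
  | n + 1 => U ⊓ conjSubgroup g (partPlus g U n)

theorem partPlus_le_self (n : ℕ) : partPlus g U n ≤ U := by
  cases n with
  | zero => exact le_rfl
  | succ n => exact inf_le_left

theorem partPlus_antitone : ∀ n : ℕ, partPlus g U (n + 1) ≤ partPlus g U n
  | 0 => inf_le_left
  | n + 1 => inf_le_inf le_rfl (conjSubgroup_mono g (partPlus_antitone n))

theorem partPlus_le_of_le {m n : ℕ} (h : m ≤ n) : partPlus g U n ≤ partPlus g U m := by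
  induction n with
  | zero => simp [Nat.le_zero.mp h]
  | succ n ih =>
    rcases Nat.eq_or_lt_of_le h with rfl | h'
    · exact le_rfl
    · exact le_trans (partPlus_antitone g U n) (ih (Nat.lt_succ_iff.mp h'))

theorem plusSubgroup_le_partPlus (n : ℕ) : plusSubgroup g U ≤ partPlus g U n := by
  induction n with
  | zero => exact plusSubgroup_le g U
  | succ n ih =>
    exact le_inf (plusSubgroup_le g U)
      (le_trans (plusSubgroup_le_conj g U) (conjSubgroup_mono g ih))

theorem partPlus_le_conj_pow (n : ℕ) : partPlus g U n ≤ conjSubgroup (g ^ n) U := by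
  induction n with
  | zero => simp [partPlus, conjSubgroup_one]
  | succ n ih =>
    refine le_trans inf_le_right ?_
    refine le_trans (conjSubgroup_mono g ih) ?_
    rw [conjSubgroup_conjSubgroup, ← pow_succ']

theorem mem_plusSubgroup_of_forall_partPlus {x : G} (h : ∀ n, x ∈ partPlus g U n) :
    x ∈ plusSubgroup g U := by
  rw [mem_plusSubgroup]
  exact fun n => partPlus_le_conj_pow g U n (h n)

theorem conj_inv_partPlus (n : ℕ) :
    conjSubgroup g⁻¹ (partPlus g U (n + 1)) = conjSubgroup g⁻¹ U ⊓ partPlus g U n := by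
  show conjSubgroup g⁻¹ (U ⊓ conjSubgroup g (partPlus g U n)) = _
  rw [conjSubgroup_inf, conjSubgroup_conjSubgroup, inv_mul_cancel, conjSubgroup_one]

end PlusBasics
section Topology

variable [Group G] [TopologicalSpace G] [IsTopologicalGroup G]

/-- conjugation as homeomorphism -/
def conjHomeo (g : G) : G ≃ₜ G := (Homeomorph.mulLeft g).trans (Homeomorph.mulRight g⁻¹)

theorem conjSubgroup_coe (g : G) (U : Subgroup G) :
    (conjSubgroup g U : Set G) = (conjHomeo g) '' (U : Set G) := by
  ext x
  simp only [SetLike.mem_coe, mem_conjSubgroup, Set.mem_image]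
  constructor
  · intro h
    exact ⟨g⁻¹ * x * g, h, by simp [conjHomeo, mul_assoc]⟩
  · rintro ⟨y, hy, rfl⟩
    simpa [conjHomeo, mul_assoc] using hy

theorem IsCompact.conjSubgroup {U : Subgroup G} (h : IsCompact (U : Set G)) (g : G) :
    IsCompact ((conjSubgroup g U : Subgroup G) : Set G) := by
  rw [conjSubgroup_coe]
  exact h.image (conjHomeo g).continuous

theorem IsOpen.conjSubgroup {U : Subgroup G} (h : IsOpen (U : Set G)) (g : G) :
    IsOpen ((conjSubgroup g U : Subgroup G) : Set G) := by
  rw [conjSubgroup_coe]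
  exact (conjHomeo g).isOpen_image.mpr h

theorem Subgroup.IsCompactOpen.conjSubgroup {U : Subgroup G} (h : U.IsCompactOpen) (g : G) :
    (conjSubgroup g U).IsCompactOpen :=
  ⟨h.1.conjSubgroup g, h.2.conjSubgroup g⟩

variable [T2Space G]

theorem isClosed_conjSubgroup {U : Subgroup G} (h : IsCompact (U : Set G)) (g : G) :
    IsClosed ((conjSubgroup g U : Subgroup G) : Set G) :=
  (h.conjSubgroup g).isClosed

theorem isClosed_plusSubgroup {U : Subgroup G} (h : IsCompact (U : Set G)) (g : G) :
    IsClosed ((plusSubgroup g U : Subgroup G) : Set G) := by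
  have : ((plusSubgroup g U : Subgroup G) : Set G) =
      ⋂ n : ℕ, ((conjSubgroup (g ^ n) U : Subgroup G) : Set G) := by
    ext x
    simp [mem_plusSubgroup]
  rw [this]
  exact isClosed_iInter fun n => isClosed_conjSubgroup h _

theorem isCompact_plusSubgroup {U : Subgroup G} (h : IsCompact (U : Set G)) (g : G) :
    IsCompact ((plusSubgroup g U : Subgroup G) : Set G) :=
  h.of_isClosed_subset (isClosed_plusSubgroup h g) (plusSubgroup_le g U)

theorem isClosed_partPlus {U : Subgroup G} (h : IsCompact (U : Set G)) (g : G) (n : ℕ) :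
    IsClosed ((partPlus g U n : Subgroup G) : Set G) := by
  induction n with
  | zero => exact h.isClosed
  | succ n ih =>
    show IsClosed ((U ⊓ conjSubgroup g (partPlus g U n) : Subgroup G) : Set G)
    rw [Subgroup.coe_inf]
    refine h.isClosed.inter ?_
    rw [conjSubgroup_coe]
    exact ((conjHomeo g).isClosed_image).mpr ih

omit [T2Space G] in
/-- The index of an open subgroup in a compact subgroup is finite (nonzero). -/
theorem relindex_ne_zero_of_isOpen_of_isCompact {B A : Subgroup G}
    (hB : IsOpen (B : Set G)) (hA : IsCompact (A : Set G)) : B.relIndex A ≠ 0 := by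
  have : CompactSpace A := isCompact_iff_compactSpace.mp hA
  have hopen : IsOpen ((B.subgroupOf A : Subgroup A) : Set A) := by
    have : ((B.subgroupOf A : Subgroup A) : Set A) = Subtype.val ⁻¹' (B : Set G) := by
      ext x; rfl
    rw [this]
    exact hB.preimage continuous_subtype_val
  have := Subgroup.quotient_finite_of_isOpen (B.subgroupOf A) hopen
  have : Nat.card (A ⧸ B.subgroupOf A) ≠ 0 := Nat.card_ne_zero.mpr ⟨inferInstance, this⟩
  rwa [Subgroup.relIndex, Subgroup.index_eq_card]

end Topology

section Saturation

variable [Group G]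

/-- If `A ≤ C` and `[A : A∩B] = [C : C∩B]` is finite, then `C = A (B ∩ C)`. -/
theorem exists_mul_of_relindex_eq {A C B : Subgroup G} (hAC : A ≤ C)
    (h : B.relIndex A = B.relIndex C) (hfin : B.relIndex C ≠ 0) {x : G} (hx : x ∈ C) :
    ∃ a ∈ A, ∃ b ∈ B ⊓ C, x = a * b := by
  have hfinQ : Finite (C ⧸ B.subgroupOf C) := by
    rw [Subgroup.relIndex, Subgroup.index_eq_card] at hfin
    exact (Nat.card_ne_zero.mp hfin).2
  set e := Subgroup.quotientSubgroupOfEmbeddingOfLE B hAC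
  have hcard : Nat.card (A ⧸ B.subgroupOf A) = Nat.card (C ⧸ B.subgroupOf C) := by
    rw [← Subgroup.index_eq_card, ← Subgroup.index_eq_card]
    exact h
  have hbij : Function.Bijective e :=
    (Nat.bijective_iff_injective_and_card e).mpr ⟨e.injective, hcard⟩
  obtain ⟨q, hq⟩ := hbij.2 (QuotientGroup.mk ⟨x, hx⟩)
  induction q using Quotient.ind with
  | _ a =>
    have : e (QuotientGroup.mk a) = QuotientGroup.mk (Subgroup.inclusion hAC a) := rfl
    rw [this] at hq
    have hmem : (Subgroup.inclusion hAC a)⁻¹ * (⟨x, hx⟩ : C) ∈ B.subgroupOf C :=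
      (QuotientGroup.eq (s := B.subgroupOf C)).mp hq
    rw [Subgroup.mem_subgroupOf] at hmem
    refine ⟨(a : G), a.2, (a : G)⁻¹ * x, ⟨?_, ?_⟩, by group⟩
    · simpa using hmem
    · exact Subgroup.mul_mem _ (Subgroup.inv_mem _ (hAC a.2)) hx

end Saturation
/-- `U` is tidy above for `g` if `[gU₊g⁻¹ : U₊] = [gUg⁻¹ : gUg⁻¹ ∩ U]`. -/
def TidyAbove [Group G] (g : G) (U : Subgroup G) : Prop :=
  (plusSubgroup g U).relIndex (conjSubgroup g (plusSubgroup g U)) = U.relIndex (conjSubgroup g U)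

section TidyAboveDevelopment

variable [Group G] [TopologicalSpace G] [IsTopologicalGroup G] [T2Space G]
variable {g : G} {U : Subgroup G}

theorem isCompact_partPlus (hco : U.IsCompactOpen) (g : G) (n : ℕ) :
    IsCompact ((partPlus g U n : Subgroup G) : Set G) :=
  hco.1.of_isClosed_subset (isClosed_partPlus hco.1 g n) (partPlus_le_self g U n)

theorem relindex_plus_eq (hco : U.IsCompactOpen) :
    U.relIndex (conjSubgroup g (plusSubgroup g U)) =
      (plusSubgroup g U).relIndex (conjSubgroup g (plusSubgroup g U)) := by
  rw [← Subgroup.inf_relIndex_right (H := U) (K := conjSubgroup g (plusSubgroup g U)),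
    inf_conj_plusSubgroup]

theorem relindex_partPlus_eq (hta : TidyAbove g U) (hco : U.IsCompactOpen) (n : ℕ) :
    U.relIndex (conjSubgroup g (partPlus g U n)) = U.relIndex (conjSubgroup g U) := by
  have hfin1 : U.relIndex (conjSubgroup g U) ≠ 0 :=
    relindex_ne_zero_of_isOpen_of_isCompact hco.2 (hco.1.conjSubgroup g)
  have hfin2 : U.relIndex (conjSubgroup g (partPlus g U n)) ≠ 0 :=
    relindex_ne_zero_of_isOpen_of_isCompact hco.2 ((isCompact_partPlus hco g n).conjSubgroup g)
  apply le_antisymm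
  · exact Subgroup.relIndex_le_of_le_right
      (conjSubgroup_mono g (partPlus_le_self g U n)) hfin1
  · calc U.relIndex (conjSubgroup g U)
        = U.relIndex (conjSubgroup g (plusSubgroup g U)) := by
          rw [relindex_plus_eq hco, hta]
      _ ≤ U.relIndex (conjSubgroup g (partPlus g U n)) :=
          Subgroup.relIndex_le_of_le_right
            (conjSubgroup_mono g (plusSubgroup_le_partPlus g U n)) hfin2

theorem decomp_base (hta : TidyAbove g U) (hco : U.IsCompactOpen) (n : ℕ) {u : G}
    (hu : u ∈ U) : ∃ a ∈ partPlus g U n, ∃ b ∈ U ⊓ conjSubgroup g⁻¹ U, u = a * b := by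
  have hAC : conjSubgroup g (partPlus g U n) ≤ conjSubgroup g U :=
    conjSubgroup_mono g (partPlus_le_self g U n)
  have hfin : U.relIndex (conjSubgroup g U) ≠ 0 :=
    relindex_ne_zero_of_isOpen_of_isCompact hco.2 (hco.1.conjSubgroup g)
  have hx : g * u * g⁻¹ ∈ conjSubgroup g U := by
    rw [mem_conjSubgroup]
    simpa [mul_assoc] using hu
  obtain ⟨a', ha', b', hb', heq⟩ :=
    exists_mul_of_relindex_eq hAC (relindex_partPlus_eq hta hco n) hfin hx
  rw [Subgroup.mem_inf] at hb'
  refine ⟨g⁻¹ * a' * g, mem_conjSubgroup.mp ha', g⁻¹ * b' * g,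
    Subgroup.mem_inf.mpr ⟨mem_conjSubgroup.mp hb'.2, ?_⟩, ?_⟩
  · rw [mem_conjSubgroup, inv_inv]
    simpa [mul_assoc] using hb'.1
  · have : u = g⁻¹ * (g * u * g⁻¹) * g := by group
    rw [this, heq]; group

theorem decomp_full (hta : TidyAbove g U) (hco : U.IsCompactOpen) :
    ∀ m n : ℕ, ∀ u ∈ U, ∃ a ∈ partPlus g U n, ∃ b ∈ partPlus g⁻¹ U m, u = a * b := by
  intro m
  induction m with
  | zero => exact fun n u hu => ⟨1, Subgroup.one_mem _, u, hu, (one_mul u).symm⟩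
  | succ m ih =>
    intro n u hu
    obtain ⟨a, ha, b, hb, rfl⟩ := decomp_base hta hco n hu
    rw [Subgroup.mem_inf] at hb
    have hb' : g * b * g⁻¹ ∈ U := by
      have := mem_conjSubgroup.mp hb.2
      rwa [inv_inv] at this
    obtain ⟨a₁, ha₁, b₁, hb₁, heq⟩ := ih (n + 1) _ hb'
    have key : b = (g⁻¹ * a₁ * g) * (g⁻¹ * b₁ * g) := by
      have : b = g⁻¹ * (g * b * g⁻¹) * g := by group
      rw [this, heq]; group
    have ha₂ : g⁻¹ * a₁ * g ∈ partPlus g U n := by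
      have : g⁻¹ * a₁ * g ∈ conjSubgroup g⁻¹ (partPlus g U (n + 1)) := by
        rw [mem_conjSubgroup, inv_inv]
        simpa [mul_assoc] using ha₁
      rw [conj_inv_partPlus] at this
      exact this.2
    have hb₂ : g⁻¹ * b₁ * g ∈ partPlus g⁻¹ U (m + 1) := by
      show g⁻¹ * b₁ * g ∈ U ⊓ conjSubgroup g⁻¹ (partPlus g⁻¹ U m)
      rw [Subgroup.mem_inf]
      constructor
      · have : g⁻¹ * b₁ * g = (g⁻¹ * a₁ * g)⁻¹ * b := by rw [key]; group
        rw [this]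
        exact Subgroup.mul_mem _ (Subgroup.inv_mem _ (partPlus_le_self g U n ha₂))
          (hb.1)
      · rw [mem_conjSubgroup, inv_inv]
        simpa [mul_assoc] using hb₁
    exact ⟨a * (g⁻¹ * a₁ * g), Subgroup.mul_mem _ ha ha₂, g⁻¹ * b₁ * g, hb₂, by
      rw [key]; group⟩

theorem mem_of_clusterPt_seq {X : Type*} [TopologicalSpace X] {x : X} {seq : ℕ → X} {t : Set X}
    (hx : ClusterPt x (Filter.map seq Filter.atTop)) (ht : IsClosed t)
    (h : ∀ᶠ n in Filter.atTop, seq n ∈ t) : x ∈ t := by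
  have hle : Filter.map seq Filter.atTop ≤ Filter.principal t := by
    rw [Filter.le_principal_iff, Filter.mem_map]
    exact h
  exact ht.closure_eq ▸ mem_closure_iff_clusterPt.mpr (hx.mono hle)

/-- Tidy above implies `U = U₊ U₋`. -/
theorem decomp_plus_minus (hta : TidyAbove g U) (hco : U.IsCompactOpen) {u : G} (hu : u ∈ U) :
    ∃ a ∈ plusSubgroup g U, ∃ b ∈ plusSubgroup g⁻¹ U, u = a * b := by
  have hchoice : ∀ n : ℕ, ∃ a ∈ partPlus g U n, ∃ b ∈ partPlus g⁻¹ U n, u = a * b :=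
    fun n => decomp_full hta hco n n u hu
  choose aseq haseq bseq hbseq hab using hchoice
  have hle : Filter.map aseq Filter.atTop ≤ Filter.principal (U : Set G) := by
    rw [Filter.le_principal_iff, Filter.mem_map]
    exact Filter.Eventually.of_forall fun n => partPlus_le_self g U n (haseq n)
  obtain ⟨a, haU, hacl⟩ := hco.1.exists_clusterPt hle
  have haP : a ∈ plusSubgroup g U := by
    apply mem_plusSubgroup_of_forall_partPlus
    intro m
    refine mem_of_clusterPt_seq hacl (isClosed_partPlus hco.1 g m) ?_
    filter_upwards [Filter.eventually_ge_atTop m] with n hn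
    exact partPlus_le_of_le g U hn (haseq n)
  have hbcl : ClusterPt (a⁻¹ * u) (Filter.map (fun n => (aseq n)⁻¹ * u) Filter.atTop) := by
    refine hacl.map (f := fun x => x⁻¹ * u) (by fun_prop) ?_
    exact Filter.tendsto_map
  have hbP : a⁻¹ * u ∈ plusSubgroup g⁻¹ U := by
    apply mem_plusSubgroup_of_forall_partPlus
    intro m
    refine mem_of_clusterPt_seq hbcl (isClosed_partPlus hco.1 g⁻¹ m) ?_
    filter_upwards [Filter.eventually_ge_atTop m] with n hn
    have : (aseq n)⁻¹ * u = bseq n := by rw [hab n]; group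
    rw [this]
    exact partPlus_le_of_le g⁻¹ U hn (hbseq n)
  exact ⟨a, haP, a⁻¹ * u, hbP, by group⟩

end TidyAboveDevelopment
section PlusPlusAlg

variable [Group G] {g : G} {U : Subgroup G}

theorem mem_plusPlusSet {x : G} :
    x ∈ plusPlusSet g U ↔ ∃ n : ℕ, x ∈ conjSubgroup (g ^ n) (plusSubgroup g U) := by
  simp [plusPlusSet]

theorem plusPlusSet_mul_mem {x y : G} (hx : x ∈ plusPlusSet g U) (hy : y ∈ plusPlusSet g U) :
    x * y ∈ plusPlusSet g U := by
  rw [mem_plusPlusSet] at hx hy ⊢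
  obtain ⟨n, hn⟩ := hx
  obtain ⟨m, hm⟩ := hy
  exact ⟨max n m, Subgroup.mul_mem _
    (conj_pow_plus_mono g U (le_max_left n m) hn)
    (conj_pow_plus_mono g U (le_max_right n m) hm)⟩

theorem plusPlusSet_inv_mem {x : G} (hx : x ∈ plusPlusSet g U) :
    x⁻¹ ∈ plusPlusSet g U := by
  rw [mem_plusPlusSet] at hx ⊢
  obtain ⟨n, hn⟩ := hx
  exact ⟨n, Subgroup.inv_mem _ hn⟩

end PlusPlusAlg

section PlusPlus
variable [Group G] [TopologicalSpace G] [IsTopologicalGroup G] [LocallyCompactSpace G] [T2Space G]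
variable {g : G} {U : Subgroup G}
theorem exists_subset_conj_pow_of_isCompact (hclosed : IsClosed (plusPlusSet g U))
    (hco : U.IsCompactOpen) {C : Set G} (hC : IsCompact C) (hsub : C ⊆ plusPlusSet g U) :
    ∃ N : ℕ, C ⊆ (conjSubgroup (g ^ N) (plusSubgroup g U) : Set G) := by
  set P : Set G := plusPlusSet g U with hP
  set W : ℕ → Subgroup G := fun n => conjSubgroup (g ^ n) (plusSubgroup g U) with hW
  have hWclosed : ∀ n, IsClosed ((W n : Subgroup G) : Set G) := fun n =>
    ((isCompact_plusSubgroup hco.1 g).conjSubgroup _).isClosed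
  haveI : Nonempty P := ⟨⟨1, by
    rw [hP, mem_plusPlusSet]; exact ⟨0, Subgroup.one_mem _⟩⟩⟩
  haveI : LocallyCompactSpace P := hclosed.isClosedEmbedding_subtypeVal.locallyCompactSpace
  have hcover : ⋃ n : ℕ, (Subtype.val ⁻¹' (W n : Set G) : Set P) = Set.univ := by
    ext x
    simpa using mem_plusPlusSet.mp x.2
  obtain ⟨N, hN⟩ := nonempty_interior_of_iUnion_of_closed
    (f := fun n => (Subtype.val ⁻¹' (W n : Set G) : Set P))
    (fun n => (hWclosed n).preimage continuous_subtype_val) hcover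
  obtain ⟨x, hx⟩ := hN
  rw [mem_interior] at hx
  obtain ⟨t, hts, htopen, hxt⟩ := hx
  rw [isOpen_induced_iff] at htopen
  obtain ⟨O, hOopen, rfl⟩ := htopen
  have hkey : ∀ z ∈ O, z ∈ P → z ∈ W N := fun z hzO hzP => hts (a := ⟨z, hzP⟩) hzO
  have hxO : (x : G) ∈ O := hxt
  have hnbhd : ∀ c ∈ C, ∃ m : ℕ, ∃ V : Set G, IsOpen V ∧ c ∈ V ∧
      ∀ z ∈ V, z ∈ P → z ∈ W (max m N) := by
    intro c hc
    obtain ⟨m, hm⟩ := mem_plusPlusSet.mp (hsub hc)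
    refine ⟨m, (fun z => (x : G) * c⁻¹ * z) ⁻¹' O, hOopen.preimage (by fun_prop), ?_, ?_⟩
    · show (x : G) * c⁻¹ * c ∈ O
      simpa [mul_assoc] using hxO
    · intro z hz hzP
      have hxP : (x : G) ∈ P := x.2
      have hcP : c ∈ P := hsub hc
      have hoP : (x : G) * c⁻¹ * z ∈ P :=
        plusPlusSet_mul_mem (plusPlusSet_mul_mem hxP (plusPlusSet_inv_mem hcP)) hzP
      have ho : (x : G) * c⁻¹ * z ∈ W N := hkey _ hz hoP
      have hzz : z = c * (x : G)⁻¹ * ((x : G) * c⁻¹ * z) := by group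
      rw [hzz]
      refine Subgroup.mul_mem _ (Subgroup.mul_mem _ ?_ ?_) ?_
      · exact conj_pow_plus_mono g U (le_max_left m N) hm
      · exact Subgroup.inv_mem _ (conj_pow_plus_mono g U (le_max_right m N) (hkey _ hxO x.2))
      · exact conj_pow_plus_mono g U (le_max_right m N) ho
  choose msel Vsel hVopen hVmem hVsub using hnbhd
  obtain ⟨s, hs⟩ := hC.elim_nhds_subcover' (fun c hc => Vsel c hc)
    (fun c hc => (hVopen c hc).mem_nhds (hVmem c hc))
  refine ⟨s.sup fun c => max (msel c.1 c.2) N, fun z hz => ?_⟩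
  obtain ⟨c, hcs, hzV⟩ := Set.mem_iUnion₂.mp (hs hz)
  have hzw : z ∈ W (max (msel c.1 c.2) N) := hVsub c.1 c.2 z hzV (hsub hz)
  have hleM : max (msel c.1 c.2) N ≤ s.sup fun c => max (msel c.1 c.2) N :=
    Finset.le_sup (f := fun c => max (msel c.1 c.2) N) (b := c) hcs
  exact conj_pow_plus_mono g U hleM hzw
end PlusPlus
section ZPowBasics

variable [Group G] (g : G) (U : Subgroup G)

theorem mem_conj_zpow {a : ℤ} {x : G} {A : Subgroup G} :
    x ∈ conjSubgroup (g ^ a) A ↔ g ^ (-a) * x * g ^ a ∈ A := by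
  rw [mem_conjSubgroup, zpow_neg]

theorem conj_zpow_shift (a j : ℤ) (x : G) (A : Subgroup G) :
    g ^ (-j) * x * g ^ j ∈ conjSubgroup (g ^ a) A ↔ x ∈ conjSubgroup (g ^ (a + j)) A := by
  rw [mem_conj_zpow, mem_conj_zpow]
  have h : g ^ (-a) * (g ^ (-j) * x * g ^ j) * g ^ a = g ^ (-(a + j)) * x * g ^ (a + j) := by
    group
  rw [h]

theorem plus_le_conj_zpow {a : ℤ} (ha : 0 ≤ a) :
    plusSubgroup g U ≤ conjSubgroup (g ^ a) (plusSubgroup g U) := by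
  obtain ⟨n, rfl⟩ := Int.eq_ofNat_of_zero_le ha
  rw [zpow_natCast]
  exact plusSubgroup_le_conj_pow_plus g U n

theorem conj_zpow_le_plus {a : ℤ} (ha : a ≤ 0) :
    conjSubgroup (g ^ a) (plusSubgroup g U) ≤ plusSubgroup g U := by
  obtain ⟨n, hn⟩ : ∃ n : ℕ, a = -(n : ℤ) :=
    ⟨(-a).toNat, by rw [Int.toNat_of_nonneg (neg_nonneg.mpr ha)]; ring⟩
  subst hn
  rw [zpow_neg, zpow_natCast]
  exact conj_neg_pow_plusSubgroup_le g U n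

theorem conj_zpow_plus_mono {a b : ℤ} (hab : a ≤ b) :
    conjSubgroup (g ^ a) (plusSubgroup g U) ≤ conjSubgroup (g ^ b) (plusSubgroup g U) := by
  have h : conjSubgroup (g ^ a) (plusSubgroup g U)
      = conjSubgroup (g ^ b) (conjSubgroup (g ^ (a - b)) (plusSubgroup g U)) := by
    rw [conjSubgroup_conjSubgroup, ← zpow_add]
    congr 2
    ring
  rw [h]
  exact conjSubgroup_mono _ (conj_zpow_le_plus g U (sub_nonpos.mpr hab))

theorem conj_zpow_le_minus {a : ℤ} (ha : 0 ≤ a) :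
    conjSubgroup (g ^ a) (plusSubgroup g⁻¹ U) ≤ plusSubgroup g⁻¹ U := by
  have h : g ^ a = (g⁻¹) ^ (-a) := by
    rw [zpow_neg, ← inv_zpow, inv_inv]
  rw [h]
  exact conj_zpow_le_plus g⁻¹ U (neg_nonpos.mpr ha)

theorem conj_zpow_plus_subset_plusPlus (a : ℤ) :
    (conjSubgroup (g ^ a) (plusSubgroup g U) : Set G) ⊆ plusPlusSet g U := by
  intro x hx
  rw [mem_plusPlusSet]
  rcases le_or_gt a 0 with h | h
  · exact ⟨0, by
      rw [pow_zero, conjSubgroup_one]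
      exact conj_zpow_le_plus g U h hx⟩
  · refine ⟨a.toNat, ?_⟩
    have hgg : g ^ a.toNat = g ^ a := by
      rw [← zpow_natCast, Int.toNat_of_nonneg h.le]
    rw [hgg]
    exact hx

end ZPowBasics

section CoreLemma

variable [Group G] [TopologicalSpace G] [IsTopologicalGroup G] [LocallyCompactSpace G] [T2Space G]
variable {g : G} {U : Subgroup G}

/-- Key consequence of tidiness below: `U₋ ∩ U₊₊ ⊆ U₊`. -/
theorem mem_plus_of_mem_minus_of_mem_conj_pow (hclosed : IsClosed (plusPlusSet g U))
    (hco : U.IsCompactOpen) {x : G} (hxm : x ∈ plusSubgroup g⁻¹ U) {n : ℕ}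
    (hxp : x ∈ conjSubgroup (g ^ n) (plusSubgroup g U)) :
    x ∈ plusSubgroup g U := by
  have hxpz : x ∈ conjSubgroup (g ^ (n : ℤ)) (plusSubgroup g U) := by
    rwa [zpow_natCast]
  set S : ℤ → G := fun j => g ^ (-j) * x * g ^ j with hS
  have hSplus : ∀ j : ℤ, S j ∈ conjSubgroup (g ^ ((n : ℤ) - j)) (plusSubgroup g U) := by
    intro j
    rw [hS]
    rw [conj_zpow_shift g ((n : ℤ) - j) j x (plusSubgroup g U), sub_add_cancel]
    exact hxpz
  have hSpp : ∀ j : ℤ, S j ∈ plusPlusSet g U := fun j =>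
    conj_zpow_plus_subset_plusPlus g U _ (hSplus j)
  have hSminus : ∀ j : ℤ, j ≤ 0 → S j ∈ plusSubgroup g⁻¹ U := by
    intro j hj
    have hmem : S j ∈ conjSubgroup (g ^ (-j)) (plusSubgroup g⁻¹ U) := by
      rw [hS, conj_zpow_shift g (-j) j x (plusSubgroup g⁻¹ U), neg_add_cancel, zpow_zero,
        conjSubgroup_one]
      exact hxm
    exact conj_zpow_le_minus g U (neg_nonneg.mpr hj) hmem
  have hSU : ∀ j : ℤ, j < 0 ∨ (n : ℤ) < j → S j ∈ U := by
    rintro j (hj | hj)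
    · exact plusSubgroup_le g⁻¹ U (hSminus j hj.le)
    · refine plusSubgroup_le g U ?_
      exact conj_zpow_le_plus g U (by omega) (hSplus j)
  -- the orbit is contained in a compact subset of `U₊₊`
  set C : Set G := (((U : Set G) ∪ (S '' (Set.Icc (0 : ℤ) (n : ℤ)))) ∩ plusPlusSet g U)
    with hC
  have hCcomp : IsCompact C :=
    (hco.1.union ((Set.finite_Icc _ _).image S).isCompact).inter_right hclosed
  have hSC : ∀ j : ℤ, S j ∈ C := by
    intro j
    refine ⟨?_, hSpp j⟩
    rcases lt_or_ge j 0 with hj | hj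
    · exact Or.inl (hSU j (Or.inl hj))
    · rcases le_or_gt j (n : ℤ) with hj' | hj'
      · exact Or.inr ⟨j, ⟨hj, hj'⟩, rfl⟩
      · exact Or.inl (hSU j (Or.inr hj'))
  obtain ⟨N, hN⟩ := exists_subset_conj_pow_of_isCompact hclosed hco hCcomp
    Set.inter_subset_right
  have hSW : ∀ j : ℤ, S j ∈ conjSubgroup (g ^ ((N : ℕ) : ℤ)) (plusSubgroup g U) := by
    intro j
    have := hN (hSC j)
    rwa [← zpow_natCast] at this
  have hxall : ∀ k : ℕ, x ∈ conjSubgroup (g ^ k) U := by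
    intro k
    have := hSW ((k : ℤ) - (N : ℤ))
    rw [hS, conj_zpow_shift g ((N : ℕ) : ℤ) ((k : ℤ) - (N : ℤ)) x (plusSubgroup g U)] at this
    have hxk : x ∈ conjSubgroup (g ^ (k : ℤ)) (plusSubgroup g U) := by
      have harith : ((N : ℕ) : ℤ) + ((k : ℤ) - (N : ℤ)) = (k : ℤ) := by ring
      rwa [harith] at this
    rw [zpow_natCast] at hxk
    exact conjSubgroup_mono _ (plusSubgroup_le g U) hxk
  exact (mem_plusSubgroup g U).mpr hxall

/-- For tidy `U`, `U ∩ gⁿU₊g⁻ⁿ = U₊`. -/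
theorem inf_conj_pow_plus_of_tidy (hta : TidyAbove g U) (hclosed : IsClosed (plusPlusSet g U))
    (hco : U.IsCompactOpen) (n : ℕ) :
    U ⊓ conjSubgroup (g ^ n) (plusSubgroup g U) = plusSubgroup g U := by
  apply le_antisymm
  · intro x hx
    rw [Subgroup.mem_inf] at hx
    obtain ⟨a, ha, b, hb, rfl⟩ := decomp_plus_minus hta hco hx.1
    have hbW : b ∈ conjSubgroup (g ^ n) (plusSubgroup g U) := by
      have hab : b = a⁻¹ * (a * b) := by group
      rw [hab]
      exact Subgroup.mul_mem _
        (Subgroup.inv_mem _ (plusSubgroup_le_conj_pow_plus g U n ha)) hx.2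
    exact Subgroup.mul_mem _ ha
      (mem_plus_of_mem_minus_of_mem_conj_pow hclosed hco hb hbW)
  · exact le_inf (plusSubgroup_le g U) (plusSubgroup_le_conj_pow_plus g U n)

end CoreLemma
section IndexComputations

variable [Group G] [TopologicalSpace G] [IsTopologicalGroup G] [LocallyCompactSpace G] [T2Space G]
variable {g : G} {U V : Subgroup G}

theorem relindex_plus_conj_pow (hta : TidyAbove g U) (n : ℕ) :
    (plusSubgroup g U).relIndex (conjSubgroup (g ^ n) (plusSubgroup g U)) =
      (U.relIndex (conjSubgroup g U)) ^ n := by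
  induction n with
  | zero => rw [pow_zero, conjSubgroup_one, Subgroup.relIndex_self, pow_zero]
  | succ n ih =>
    have hstep : conjSubgroup (g ^ (n + 1)) (plusSubgroup g U) =
        conjSubgroup (g ^ n) (conjSubgroup g (plusSubgroup g U)) := by
      rw [conjSubgroup_conjSubgroup, ← pow_succ]
    have hmul := Subgroup.relIndex_mul_relIndex (plusSubgroup g U)
      (conjSubgroup (g ^ n) (plusSubgroup g U)) (conjSubgroup (g ^ (n + 1)) (plusSubgroup g U))
      (plusSubgroup_le_conj_pow_plus g U n) (conj_pow_plus_mono g U (Nat.le_succ n))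
    have hconj : (conjSubgroup (g ^ n) (plusSubgroup g U)).relIndex
        (conjSubgroup (g ^ (n + 1)) (plusSubgroup g U)) = U.relIndex (conjSubgroup g U) := by
      rw [hstep, relindex_conjSubgroup, hta]
    rw [← hmul, ih, hconj, pow_succ]

theorem relindex_conj_pow_of_tidy (hta : TidyAbove g U) (hclosed : IsClosed (plusPlusSet g U))
    (hco : U.IsCompactOpen) (n : ℕ) :
    U.relIndex (conjSubgroup (g ^ n) U) = (U.relIndex (conjSubgroup g U)) ^ n := by
  have hfin : ∀ m : ℕ, U.relIndex (conjSubgroup (g ^ m) U) ≠ 0 := fun m =>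
    relindex_ne_zero_of_isOpen_of_isCompact hco.2 (hco.1.conjSubgroup _)
  apply le_antisymm
  · -- upper bound by induction
    induction n with
    | zero => rw [pow_zero, conjSubgroup_one, Subgroup.relIndex_self, pow_zero]
    | succ n ih =>
      set A : Subgroup G := conjSubgroup (g ^ (n + 1)) U with hA
      set B : Subgroup G := conjSubgroup g U with hB
      have hAco : IsCompact (A : Set G) := hco.1.conjSubgroup _
      have h1 : U.relIndex A ≤ (U ⊓ B).relIndex A := by
        refine Subgroup.relIndex_le_of_le_left inf_le_left ?_
        refine relindex_ne_zero_of_isOpen_of_isCompact ?_ hAco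
        rw [Subgroup.coe_inf]
        exact hco.2.inter (hco.2.conjSubgroup g)
      have h2 : (U ⊓ B).relIndex A = U.relIndex (B ⊓ A) * B.relIndex A :=
        (Subgroup.relIndex_inf_mul_relIndex U B A).symm
      have h3 : B.relIndex A = U.relIndex (conjSubgroup (g ^ n) U) := by
        rw [hA, hB, show g ^ (n + 1) = g * g ^ n from pow_succ' g n,
          ← conjSubgroup_conjSubgroup, relindex_conjSubgroup]
      have h4 : U.relIndex (B ⊓ A) ≤ U.relIndex B := by
        refine Subgroup.relIndex_le_of_le_right inf_le_left ?_
        have := hfin 1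
        rwa [pow_one] at this
      calc U.relIndex A ≤ U.relIndex (B ⊓ A) * B.relIndex A := h1.trans_eq h2
        _ ≤ U.relIndex B * (U.relIndex (conjSubgroup g U)) ^ n := by
            rw [h3]
            exact Nat.mul_le_mul h4 ih
        _ = (U.relIndex (conjSubgroup g U)) ^ (n + 1) := by
            rw [hB, pow_succ']
  · -- lower bound via the plus subgroup
    calc (U.relIndex (conjSubgroup g U)) ^ n
        = (plusSubgroup g U).relIndex (conjSubgroup (g ^ n) (plusSubgroup g U)) :=
          (relindex_plus_conj_pow hta n).symm
      _ = (U ⊓ conjSubgroup (g ^ n) (plusSubgroup g U)).relIndex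
            (conjSubgroup (g ^ n) (plusSubgroup g U)) := by
          rw [inf_conj_pow_plus_of_tidy hta hclosed hco n]
      _ = U.relIndex (conjSubgroup (g ^ n) (plusSubgroup g U)) :=
          Subgroup.inf_relIndex_right _ _
      _ ≤ U.relIndex (conjSubgroup (g ^ n) U) :=
          Subgroup.relIndex_le_of_le_right
            (conjSubgroup_mono _ (plusSubgroup_le g U)) (hfin n)

/-- comparison of `a_n` for a subgroup and a finite-index subgroup, upper side. -/
theorem relindex_conj_pow_le_of_le (hVco : V.IsCompactOpen) {W : Subgroup G}
    (hWco : W.IsCompactOpen) (hWV : W ≤ V) (n : ℕ) :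
    V.relIndex (conjSubgroup (g ^ n) V) ≤
      W.relIndex (conjSubgroup (g ^ n) W) * W.relIndex V := by
  set C : Subgroup G := conjSubgroup (g ^ n) V with hC
  set D : Subgroup G := conjSubgroup (g ^ n) W with hD
  have hDC : D ≤ C := conjSubgroup_mono _ hWV
  have h1 : V.relIndex C ≤ (D ⊓ W).relIndex C := by
    refine Subgroup.relIndex_le_of_le_left (le_trans inf_le_right hWV) ?_
    refine relindex_ne_zero_of_isOpen_of_isCompact ?_ (hVco.1.conjSubgroup _)
    rw [Subgroup.coe_inf]
    exact (hWco.2.conjSubgroup _).inter hWco.2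
  have h2 : (D ⊓ W).relIndex C = (D ⊓ W).relIndex D * D.relIndex C :=
    (Subgroup.relIndex_mul_relIndex (D ⊓ W) D C inf_le_left hDC).symm
  have h3 : (D ⊓ W).relIndex D = W.relIndex D := by
    rw [inf_comm]
    exact Subgroup.inf_relIndex_right _ _
  have h4 : D.relIndex C = W.relIndex V := by
    rw [hC, hD, relindex_conjSubgroup]
  calc V.relIndex C ≤ (D ⊓ W).relIndex C := h1
    _ = W.relIndex D * (W.relIndex V) := by rw [h2, h3, h4]
    _ = W.relIndex (conjSubgroup (g ^ n) W) * W.relIndex V := rfl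

/-- comparison of `a_n`, lower side. -/
theorem relindex_conj_pow_le_of_le' (hUco : U.IsCompactOpen) {W : Subgroup G}
    (hWco : W.IsCompactOpen) (hWU : W ≤ U) (n : ℕ) :
    W.relIndex (conjSubgroup (g ^ n) W) ≤
      W.relIndex U * U.relIndex (conjSubgroup (g ^ n) U) := by
  set C : Subgroup G := conjSubgroup (g ^ n) U with hC
  set D : Subgroup G := conjSubgroup (g ^ n) W with hD
  have hDC : D ≤ C := conjSubgroup_mono _ hWU
  have h1 : W.relIndex D ≤ W.relIndex C :=
    Subgroup.relIndex_le_of_le_right hDC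
      (relindex_ne_zero_of_isOpen_of_isCompact hWco.2 (hUco.1.conjSubgroup _))
  have h2 : W.relIndex C = (W ⊓ C).relIndex C := (Subgroup.inf_relIndex_right _ _).symm
  have h3 : (W ⊓ C).relIndex C = (W ⊓ C).relIndex (U ⊓ C) * (U ⊓ C).relIndex C :=
    (Subgroup.relIndex_mul_relIndex (W ⊓ C) (U ⊓ C) C
      (inf_le_inf_right C hWU) inf_le_right).symm
  have h4 : (U ⊓ C).relIndex C = U.relIndex C := Subgroup.inf_relIndex_right _ _
  have h5 : (W ⊓ C).relIndex (U ⊓ C) ≤ W.relIndex U := by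
    have heq : W ⊓ C = W ⊓ (U ⊓ C) := by
      rw [← inf_assoc, inf_of_le_left hWU]
    rw [heq, Subgroup.inf_relIndex_right]
    exact Subgroup.relIndex_le_of_le_right inf_le_left
      (relindex_ne_zero_of_isOpen_of_isCompact hWco.2 hUco.1)
  calc W.relIndex D ≤ (W ⊓ C).relIndex (U ⊓ C) * (U ⊓ C).relIndex C := by
        rw [← h3, ← h2]; exact h1
    _ ≤ W.relIndex U * U.relIndex C := by
        rw [h4]
        exact Nat.mul_le_mul_right _ h5

end IndexComputations
section Arithmetic

theorem pow_add_mul_pow_le {a : ℕ} (ha : 0 < a) :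
    ∀ n : ℕ, a ^ (n + 1) + (n + 1) * a ^ n ≤ (a + 1) ^ (n + 1) := by
  intro n
  induction n with
  | zero => simp
  | succ n ih =>
    have hexp : (a + 1) ^ (n + 1 + 1) = (a + 1) ^ (n + 1) * (a + 1) := by ring
    rw [hexp]
    refine le_trans ?_ (Nat.mul_le_mul_right _ ih)
    have e1 : a ^ (n + 1 + 1) = a ^ (n + 1) * a := by ring
    have e2 : a ^ (n + 1) = a ^ n * a := by ring
    have hp : 1 ≤ a ^ n := Nat.one_le_iff_ne_zero.mpr (pow_ne_zero _ ha.ne')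
    nlinarith [hp, ha]

theorem le_of_forall_pow_le {a b c : ℕ} (ha : 0 < a) (h : ∀ n, b ^ n ≤ c * a ^ n) : b ≤ a := by
  by_contra hab
  push_neg at hab
  set n := c * a with hn
  have h1 : b ^ (n + 1) ≤ c * a ^ (n + 1) := h (n + 1)
  have h2 : (a + 1) ^ (n + 1) ≤ b ^ (n + 1) := Nat.pow_le_pow_left hab (n + 1)
  have h3 : a ^ (n + 1) + (n + 1) * a ^ n ≤ c * a ^ (n + 1) :=
    le_trans (pow_add_mul_pow_le ha n) (le_trans h2 h1)
  have e1 : a ^ (n + 1) = a ^ n * a := by ring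
  have hp : 0 < a ^ n := pow_pos ha n
  have hp1 : 0 < a ^ (n + 1) := pow_pos ha (n + 1)
  have h4 : (n + 1) * a ^ n = c * a ^ (n + 1) + a ^ n := by rw [hn, e1]; ring
  linarith [h3, h4, hp, hp1]

end Arithmetic

/-- `U₋ = ⋂_{n ≥ 0} g⁻ⁿ U gⁿ`. -/
def minusSubgroup [Group G] (g : G) (U : Subgroup G) : Subgroup G :=
  ⨅ n : ℕ, conjSubgroup (g⁻¹ ^ n) U

/-- `U₋₋ = ⋃_{n ≥ 0} g⁻ⁿ U₋ gⁿ` as a set. -/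
def minusMinusSet [Group G] (g : G) (U : Subgroup G) : Set G :=
  ⋃ n : ℕ, ((conjSubgroup (g⁻¹ ^ n) (minusSubgroup g U) : Subgroup G) : Set G)

/-- `U` is tidy below for `g` if `U₊₊` and `U₋₋` are closed. -/
def TidyBelow [Group G] [TopologicalSpace G] (g : G) (U : Subgroup G) : Prop :=
  IsClosed (plusPlusSet g U) ∧ IsClosed (minusMinusSet g U)

/-- `U` is tidy for `g` if it is tidy above and tidy below for `g`. -/
def Tidy [Group G] [TopologicalSpace G] (g : G) (U : Subgroup G) : Prop :=
  TidyAbove g U ∧ TidyBelow g U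

section Main

variable [Group G] [TopologicalSpace G] [IsTopologicalGroup G] [LocallyCompactSpace G] [T2Space G]

theorem tidy_le_tidy (g : G) (U V : Subgroup G) (hU : U.IsCompactOpen) (hV : V.IsCompactOpen)
    (hUt : Tidy g U) (hVt : Tidy g V) :
    V.relIndex (conjSubgroup g V) ≤ U.relIndex (conjSubgroup g U) := by
  set W : Subgroup G := U ⊓ V with hW
  have hWco : W.IsCompactOpen := by
    constructor
    · rw [hW, Subgroup.coe_inf]
      exact hU.1.inter_right (hV.1.isClosed)
    · rw [hW, Subgroup.coe_inf]
      exact hU.2.inter hV.2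
  have hsUpos : 0 < U.relIndex (conjSubgroup g U) :=
    Nat.pos_of_ne_zero (relindex_ne_zero_of_isOpen_of_isCompact hU.2 (hU.1.conjSubgroup g))
  refine le_of_forall_pow_le (c := W.relIndex U * W.relIndex V) hsUpos ?_
  intro n
  calc (V.relIndex (conjSubgroup g V)) ^ n
      = V.relIndex (conjSubgroup (g ^ n) V) :=
        (relindex_conj_pow_of_tidy hVt.1 hVt.2.1 hV n).symm
    _ ≤ W.relIndex (conjSubgroup (g ^ n) W) * W.relIndex V :=
        relindex_conj_pow_le_of_le hV hWco inf_le_right n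
    _ ≤ (W.relIndex U * U.relIndex (conjSubgroup (g ^ n) U)) * W.relIndex V :=
        Nat.mul_le_mul_right _ (relindex_conj_pow_le_of_le' hU hWco inf_le_left n)
    _ = (W.relIndex U * W.relIndex V) * U.relIndex (conjSubgroup (g ^ n) U) := by ring
    _ = (W.relIndex U * W.relIndex V) * (U.relIndex (conjSubgroup g U)) ^ n := by
        rw [relindex_conj_pow_of_tidy hUt.1 hUt.2.1 hU n]

end Main

/-- The index `[V : V ∩ g⁻¹Vg]` is the same for all tidy subgroups. -/
theorem tidy_index_independent
    [Group G] [TopologicalSpace G] [IsTopologicalGroup G] [LocallyCompactSpace G] [T2Space G]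
    [TotallyDisconnectedSpace G]
    (g : G) (U V : Subgroup G) (hU : U.IsCompactOpen) (hV : V.IsCompactOpen)
    (hUt : Tidy g U) (hVt : Tidy g V) :
    (conjSubgroup g⁻¹ V).relIndex V = (conjSubgroup g⁻¹ U).relIndex U := by
  have hsymm : ∀ K : Subgroup G, (conjSubgroup g⁻¹ K).relIndex K
      = K.relIndex (conjSubgroup g K) := by
    intro K
    have h := relindex_conjSubgroup g (conjSubgroup g⁻¹ K) K
    rw [conjSubgroup_conjSubgroup, mul_inv_cancel, conjSubgroup_one] at h
    exact h.symm
  rw [hsymm V, hsymm U]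
  exact le_antisymm (tidy_le_tidy g U V hU hV hUt hVt) (tidy_le_tidy g V U hV hU hVt hUt)
end
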